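/- Let A_t be an attractor of the asynchronous transition system TS of a Boolean network BN, and let C = (𝕆,𝟙) be a control. Then C is a permanent target control for A_t (i.e., A_t ⊆ S|_C and for every state s ∈ S, every fair infinite path of TS|_C starting from C(s) eventually reaches a state of A_t) if and only if A_t is an attractor of TS|_C and C(S) ⊆ bas^S_{TS|_C}(A_t), the strong basin of A_t in TS|_C. -/

import Mathlib

/-- A state of a Boolean network with `n` variables. -/
abbrev BNState (n : ℕ) := Fin n → Bool

/-- One asynchronous transition of the Boolean network with functions `F`:
either exactly one variable `i` changes and takes the value `F i s = !(s i)`,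
or the state stays the same and some variable `i` satisfies `F i s = s i`. -/
def Step {n : ℕ} (F : Fin n → BNState n → Bool) (s s' : BNState n) : Prop :=
  (∃ i, s' i = F i s ∧ s' i = !(s i) ∧ ∀ j, j ≠ i → s' j = s j) ∨
  (s' = s ∧ ∃ i, F i s = s i)

/-- The set of states reachable from `s` by a (possibly empty) sequence of transitions. -/
def reach {n : ℕ} (F : Fin n → BNState n → Bool) (s : BNState n) : Set (BNState n) :=
  {s' | Relation.ReflTransGen (Step F) s s'}

/-- An attractor: a minimal non-empty set `A` of states with `reach F s = A` for every `s ∈ A`. -/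
def IsAttractor {n : ℕ} (F : Fin n → BNState n → Bool) (A : Set (BNState n)) : Prop :=
  A.Nonempty ∧ (∀ s ∈ A, reach F s = A) ∧
  ∀ B, B ⊆ A → B.Nonempty → (∀ s ∈ B, reach F s = B) → B = A

/-- An infinite path of the transition system. -/
def IsPath {n : ℕ} (F : Fin n → BNState n → Bool) (π : ℕ → BNState n) : Prop :=
  ∀ k, Step F (π k) (π (k + 1))

/-- A state occurs infinitely often in the sequence `π`. -/
def InfOften {n : ℕ} (π : ℕ → BNState n) (x : BNState n) : Prop :=
  ∀ N, ∃ k, N ≤ k ∧ π k = x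

/-- Fairness: every possible next state of every state occurring infinitely often
also occurs infinitely often. -/
def Fair {n : ℕ} (F : Fin n → BNState n → Bool) (π : ℕ → BNState n) : Prop :=
  ∀ x, InfOften π x → ∀ y, Step F x y → InfOften π y

/-- The weak basin of `A`: states from which `A` is reachable. -/
def weakBasin {n : ℕ} (F : Fin n → BNState n → Bool) (A : Set (BNState n)) :
    Set (BNState n) :=
  {s | (reach F s ∩ A).Nonempty}

/-- The strong basin of an attractor `A`: states from which `A` is reachable and
no other attractor is reachable. -/
def strongBasin {n : ℕ} (F : Fin n → BNState n → Bool) (A : Set (BNState n)) :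
    Set (BNState n) :=
  {s | (reach F s ∩ A).Nonempty ∧
       ∀ A', IsAttractor F A' → A' ≠ A → reach F s ∩ A' = ∅}

/-- The application of the control `C = (O, I)` to a state. -/
def applyControl {n : ℕ} (O I : Finset (Fin n)) (s : BNState n) : BNState n :=
  fun i => if i ∈ O then false else if i ∈ I then true else s i

/-- The Boolean functions of the network under control `C = (O, I)`. -/
def ctrlF {n : ℕ} (O I : Finset (Fin n)) (F : Fin n → BNState n → Bool) :
    Fin n → BNState n → Bool :=
  fun i s => if i ∈ O then false else if i ∈ I then true else F i s

/-- The state space `S|_C` of the network under control `C = (O, I)`. -/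
def ctrlSpace {n : ℕ} (O I : Finset (Fin n)) : Set (BNState n) :=
  {s | (∀ i ∈ O, s i = false) ∧ (∀ i ∈ I, s i = true)}

/-- `S'` is a schema with off-set `O`, on-set `I` and don't-care-set `D`. -/
def IsSchema {n : ℕ} (S' : Set (BNState n)) (O I D : Finset (Fin n)) : Prop :=
  Disjoint O I ∧ Disjoint O D ∧ Disjoint I D ∧ O ∪ I ∪ D = Finset.univ ∧
  S' = {s : BNState n | (∀ i ∈ O, s i = false) ∧ (∀ i ∈ I, s i = true)}

/-- The strong basin, in the transition system with functions `F` and state space `SC`,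
of a target set of states `W`: the states of `SC` from which `W` is reachable and
no attractor disjoint from `W` is reachable. -/
def strongBasinSet {n : ℕ} (F : Fin n → BNState n → Bool) (SC W : Set (BNState n)) :
    Set (BNState n) :=
  {s | s ∈ SC ∧ (reach F s ∩ W).Nonempty ∧
       ∀ A', IsAttractor F A' → A' ∩ W = ∅ → reach F s ∩ A' = ∅}

section Generic

variable {α : Type*} (r : α → α → Prop)

/-- Generic attractor of a relation. -/
def GAttr (A : Set α) : Prop :=
  A.Nonempty ∧ (∀ s ∈ A, {t | Relation.ReflTransGen r s t} = A) ∧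
  ∀ B, B ⊆ A → B.Nonempty → (∀ s ∈ B, {t | Relation.ReflTransGen r s t} = B) → B = A

/-- Generic "occurs infinitely often". -/
def GInfO (π : ℕ → α) (x : α) : Prop := ∀ N, ∃ k, N ≤ k ∧ π k = x

variable {r}

lemma GAttr.closed {A : Set α} (hA : GAttr r A) {s t : α} (hs : s ∈ A)
    (h : Relation.ReflTransGen r s t) : t ∈ A := by
  have := hA.2.1 s hs
  rw [← this]; exact h

lemma GAttr.eq_of_inter {A B : Set α} (hA : GAttr r A) (hB : GAttr r B)
    (h : (A ∩ B).Nonempty) : A = B := by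
  obtain ⟨x, hxA, hxB⟩ := h
  rw [← hA.2.1 x hxA, ← hB.2.1 x hxB]

lemma path_reach {π : ℕ → α} (hπ : ∀ k, r (π k) (π (k + 1))) {k m : ℕ} (h : k ≤ m) :
    Relation.ReflTransGen r (π k) (π m) := by
  induction m, h using Nat.le_induction with
  | base => exact Relation.ReflTransGen.refl
  | succ m hm ih => exact ih.tail (hπ m)

lemma exists_GInfO [Finite α] (π : ℕ → α) : ∃ x, GInfO π x := by
  obtain ⟨x, hx⟩ := Finite.exists_infinite_fiber π
  refine ⟨x, fun N => ?_⟩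
  obtain ⟨k, hk, hlt⟩ := (Set.infinite_coe_iff.mp hx).exists_gt N
  exact ⟨k, hlt.le, hk⟩

/-- The set of states occurring infinitely often in a fair path is an attractor. -/
lemma fair_path_infO_attr [Finite α] {π : ℕ → α}
    (hπ : ∀ k, r (π k) (π (k + 1)))
    (hfair : ∀ x, GInfO π x → ∀ y, r x y → GInfO π y) :
    GAttr r {x | GInfO π x} := by
  set L : Set α := {x | GInfO π x} with hL
  have hclosed : ∀ x ∈ L, ∀ t, Relation.ReflTransGen r x t → t ∈ L := by
    intro x hx t ht
    induction ht with
    | refl => exact hx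
    | tail _ hstep ih => exact hfair _ ih _ hstep
  have hreach : ∀ s ∈ L, {t | Relation.ReflTransGen r s t} = L := by
    intro s hs
    apply Set.eq_of_subset_of_subset
    · intro t ht; exact hclosed s hs t ht
    · intro t ht
      obtain ⟨k, -, hk⟩ := hs 0
      obtain ⟨m, hm, hmt⟩ := ht k
      have := path_reach hπ hm
      rw [hk, hmt] at this
      exact this
  refine ⟨exists_GInfO π, hreach, ?_⟩
  intro B hBL ⟨s, hs⟩ hB
  have h1 := hB s hs
  have h2 := hreach s (hBL hs)
  rw [← h1, h2]

end Generic


section Sched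

variable {α : Type*} (r : α → α → Prop)

/-- An `r`-chain from `x` extended by one more edge at the end. -/
lemma chain_snoc : ∀ (l : List α) (c b : α), List.Chain r c l →
    r ((c :: l).getLast (List.cons_ne_nil _ _)) b → List.Chain r c (l ++ [b])
  | [], c, b, _, h => List.Chain.cons h List.Chain.nil
  | h' :: t, c, b, hch, h => by
    have hch : r c h' ∧ List.Chain r h' t := List.chain_cons.mp hch
    refine List.Chain.cons hch.1 ?_
    exact chain_snoc t h' b hch.2 (by rwa [List.getLast_cons_cons] at h)

variable (htot : ∀ a, ∃ b, r a b)

open Classical in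
/-- A list realizing reachability, if any. -/
noncomputable def pathTo (c a : α) : List α :=
  if h : Relation.ReflTransGen r c a then
    (List.exists_isChain_cons_of_relationReflTransGen h).choose
  else []

lemma pathTo_spec {c a : α} (h : Relation.ReflTransGen r c a) :
    List.Chain r c (pathTo r c a) ∧
      (c :: pathTo r c a).getLast (List.cons_ne_nil _ _) = a := by
  rw [pathTo, dif_pos h]
  exact (List.exists_isChain_cons_of_relationReflTransGen h).choose_spec

/-- Turn a plan list (with final target `b`) into (first move, rest of plan). -/
def mkPlan (l : List α) (b : α) : α × List α :=
  match l with
  | [] => (b, [])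
  | h :: t => (h, t ++ [b])

lemma mkPlan_mem (l : List α) (b : α) : b = (mkPlan l b).1 ∨ b ∈ (mkPlan l b).2 := by
  cases l with
  | nil => exact Or.inl rfl
  | cons h t => exact Or.inr (by simp [mkPlan])

lemma mkPlan_spec {c a b : α} {l : List α} (hch : List.Chain r c l)
    (hlast : (c :: l).getLast (List.cons_ne_nil _ _) = a) (hab : r a b) :
    r c (mkPlan l b).1 ∧ List.Chain r (mkPlan l b).1 (mkPlan l b).2 := by
  cases l with
  | nil =>
    simp only [List.getLast_singleton] at hlast
    subst hlast
    exact ⟨hab, List.Chain.nil⟩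
  | cons h t =>
    have hch : r c h ∧ List.Chain r h t := List.chain_cons.mp hch
    refine ⟨hch.1, ?_⟩
    exact chain_snoc r t h b hch.2 (by rw [List.getLast_cons_cons] at hlast; rw [hlast]; exact hab)

open Classical in
/-- One step of the fair scheduler. -/
noncomputable def sched (pair : ℕ → α × α) : α × List α × ℕ → α × List α × ℕ
  | (_, h :: rest, j) => (h, rest, j)
  | (c, [], j) =>
    if h : Relation.ReflTransGen r c (pair j).1 ∧ r (pair j).1 (pair j).2 then
      let p := mkPlan (pathTo r c (pair j).1) (pair j).2
      (p.1, p.2, j + 1)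
    else ((htot c).choose, [], j + 1)

variable (pair : ℕ → α × α) (s0 : α)

/-- The scheduler run. -/
noncomputable def sol : ℕ → α × List α × ℕ :=
  fun k => (sched r htot pair)^[k] (s0, [], 0)

lemma sol_zero : sol r htot pair s0 0 = (s0, [], 0) := rfl

lemma sol_succ (k : ℕ) :
    sol r htot pair s0 (k + 1) = sched r htot pair (sol r htot pair s0 k) := by
  simp [sol, Function.iterate_succ_apply']

lemma sched_cons (c h : α) (rest : List α) (j : ℕ) :
    sched r htot pair (c, h :: rest, j) = (h, rest, j) := rfl

/-- Invariant: the plan is a chain from the current state; each step follows `r`. -/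
lemma sched_step (st : α × List α × ℕ) (hInv : List.Chain r st.1 st.2.1) :
    r st.1 (sched r htot pair st).1 ∧
      List.Chain r (sched r htot pair st).1 (sched r htot pair st).2.1 := by
  obtain ⟨c, plan, j⟩ := st
  cases plan with
  | cons h rest =>
    have hInv : r c h ∧ List.Chain r h rest := List.chain_cons.mp hInv
    exact ⟨hInv.1, hInv.2⟩
  | nil =>
    show r c (sched r htot pair (c, [], j)).1 ∧ _
    rw [sched]
    split
    · next hcond =>
      have hps := pathTo_spec r hcond.1
      exact mkPlan_spec r hps.1 hps.2 hcond.2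
    · exact ⟨(htot c).choose_spec, List.Chain.nil⟩

lemma sol_inv (k : ℕ) : List.Chain r (sol r htot pair s0 k).1 (sol r htot pair s0 k).2.1 := by
  induction k with
  | zero => exact List.Chain.nil
  | succ k ih =>
    rw [sol_succ]
    exact (sched_step r htot pair _ ih).2

lemma sol_path (k : ℕ) :
    r (sol r htot pair s0 k).1 (sol r htot pair s0 (k + 1)).1 := by
  rw [sol_succ]
  exact (sched_step r htot pair _ (sol_inv r htot pair s0 k)).1

/-- The counter does not decrease along a run; when the plan is empty it increments. -/
lemma sol_j_succ_le (k : ℕ) :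
    (sol r htot pair s0 (k + 1)).2.2 ≤ (sol r htot pair s0 k).2.2 + 1 := by
  rw [sol_succ]
  obtain ⟨c, plan, j⟩ := sol r htot pair s0 k
  cases plan with
  | cons h rest => simp [sched_cons]
  | nil =>
    show (sched r htot pair (c, [], j)).2.2 ≤ j + 1
    rw [sched]
    split <;> simp

lemma sol_j_le (k : ℕ) : (sol r htot pair s0 k).2.2 ≤ k := by
  induction k with
  | zero => simp [sol_zero]
  | succ k ih => exact le_trans (sol_j_succ_le r htot pair s0 k) (by omega)

lemma sol_succ_cons {k : ℕ} {h : α} {rest : List α}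
    (hplan : (sol r htot pair s0 k).2.1 = h :: rest) :
    sol r htot pair s0 (k + 1) = (h, rest, (sol r htot pair s0 k).2.2) := by
  rw [sol_succ]
  have heq : sol r htot pair s0 k = ((sol r htot pair s0 k).1, h :: rest, (sol r htot pair s0 k).2.2) := by
    rw [← hplan]
  rw [heq, sched_cons]

/-- From any time, within `plan.length` steps the plan becomes empty without
changing the counter. -/
lemma sol_empty_reach : ∀ (L k : ℕ), (sol r htot pair s0 k).2.1.length ≤ L →
    ∃ d, (sol r htot pair s0 (k + d)).2.1 = [] ∧
      (sol r htot pair s0 (k + d)).2.2 = (sol r htot pair s0 k).2.2 := by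
  intro L
  induction L with
  | zero =>
    intro k hk
    refine ⟨0, ?_, rfl⟩
    simpa using List.length_eq_zero_iff.mp (Nat.le_zero.mp hk)
  | succ L ih =>
    intro k hk
    rcases hplan : (sol r htot pair s0 k).2.1 with _ | ⟨h, rest⟩
    · exact ⟨0, hplan, rfl⟩
    · have hnext := sol_succ_cons r htot pair s0 hplan
      have hlen : (sol r htot pair s0 (k + 1)).2.1.length ≤ L := by
        rw [hnext]
        have : (h :: rest).length ≤ L + 1 := hplan ▸ hk
        simpa using this
      obtain ⟨d, hd1, hd2⟩ := ih (k + 1) hlen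
      have harith : k + (1 + d) = k + 1 + d := by omega
      refine ⟨1 + d, ?_, ?_⟩
      · rw [harith]; exact hd1
      · rw [harith, hd2, hnext]

/-- Every counter value is attained at an empty-plan stage no earlier than it. -/
lemma sol_hitJ : ∀ J : ℕ, ∃ k, (sol r htot pair s0 k).2.1 = [] ∧
    (sol r htot pair s0 k).2.2 = J ∧ J ≤ k := by
  intro J
  induction J with
  | zero => exact ⟨0, rfl, rfl, le_refl 0⟩
  | succ J ih =>
    obtain ⟨k, hk1, hk2, hk3⟩ := ih
    have hstate : sol r htot pair s0 k = ((sol r htot pair s0 k).1, [], J) := by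
      rw [← hk1, ← hk2]
    have hj1 : (sol r htot pair s0 (k + 1)).2.2 = J + 1 := by
      rw [sol_succ, hstate]
      show (sched r htot pair ((sol r htot pair s0 k).1, [], J)).2.2 = J + 1
      rw [sched]
      split <;> rfl
    obtain ⟨d, hd1, hd2⟩ := sol_empty_reach r htot pair s0
      (sol r htot pair s0 (k + 1)).2.1.length (k + 1) (le_refl _)
    exact ⟨k + 1 + d, hd1, by rw [hd2, hj1], by omega⟩

/-- Every member of the current plan is visited strictly later. -/
lemma sol_emit : ∀ (L k : ℕ) (x : α), x ∈ (sol r htot pair s0 k).2.1 →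
    (sol r htot pair s0 k).2.1.length ≤ L →
    ∃ d, 1 ≤ d ∧ (sol r htot pair s0 (k + d)).1 = x := by
  intro L
  induction L with
  | zero =>
    intro k x hx hlen
    rw [List.length_eq_zero_iff.mp (Nat.le_zero.mp hlen)] at hx
    simp at hx
  | succ L ih =>
    intro k x hx hlen
    rcases hplan : (sol r htot pair s0 k).2.1 with _ | ⟨h, rest⟩
    · rw [hplan] at hx; simp at hx
    · have hnext := sol_succ_cons r htot pair s0 hplan
      rw [hplan] at hx
      rcases List.mem_cons.mp hx with rfl | hxr
      · exact ⟨1, le_refl 1, by rw [hnext]⟩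
      · have hlen' : (sol r htot pair s0 (k + 1)).2.1.length ≤ L := by
          rw [hnext]
          have : (h :: rest).length ≤ L + 1 := hplan ▸ hlen
          simpa using this
        have hx' : x ∈ (sol r htot pair s0 (k + 1)).2.1 := by rw [hnext]; exact hxr
        obtain ⟨d, hd1, hd2⟩ := ih (k + 1) x hx' hlen'
        exact ⟨1 + d, by omega, by rw [show k + (1 + d) = k + 1 + d by omega]; exact hd2⟩

/-- At an empty-plan stage whose pair condition holds, the target is visited later. -/
lemma sol_stage_emit (k : ℕ) (hempty : (sol r htot pair s0 k).2.1 = [])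
    (hcond : Relation.ReflTransGen r (sol r htot pair s0 k).1
        (pair (sol r htot pair s0 k).2.2).1 ∧
      r (pair (sol r htot pair s0 k).2.2).1 (pair (sol r htot pair s0 k).2.2).2) :
    ∃ d, 1 ≤ d ∧ (sol r htot pair s0 (k + d)).1 = (pair (sol r htot pair s0 k).2.2).2 := by
  set c := (sol r htot pair s0 k).1 with hc
  set j := (sol r htot pair s0 k).2.2 with hj
  have hstate : sol r htot pair s0 k = (c, [], j) := by rw [hc, hj, ← hempty]
  have hnext : sol r htot pair s0 (k + 1) =
      ((mkPlan (pathTo r c (pair j).1) (pair j).2).1,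
        (mkPlan (pathTo r c (pair j).1) (pair j).2).2, j + 1) := by
    rw [sol_succ, hstate]
    show sched r htot pair (c, [], j) = _
    rw [sched, dif_pos hcond]
  rcases mkPlan_mem (pathTo r c (pair j).1) (pair j).2 with hb | hb
  · exact ⟨1, le_refl 1, by rw [hnext, ← hb]⟩
  · have hx' : (pair j).2 ∈ (sol r htot pair s0 (k + 1)).2.1 := by rw [hnext]; exact hb
    obtain ⟨d, hd1, hd2⟩ := sol_emit r htot pair s0
      (sol r htot pair s0 (k + 1)).2.1.length (k + 1) _ hx' (le_refl _)
    exact ⟨1 + d, by omega, by rw [show k + (1 + d) = k + 1 + d by omega]; exact hd2⟩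

end Sched

/-- Existence of a fair path from any state, for a total relation on a finite type. -/
theorem exists_fair_path {α : Type*} [Fintype α] [DecidableEq α] {r : α → α → Prop}
    (htot : ∀ a, ∃ b, r a b) (s0 : α) :
    ∃ π : ℕ → α, π 0 = s0 ∧ (∀ k, r (π k) (π (k + 1))) ∧
      ∀ x, GInfO π x → ∀ y, r x y → GInfO π y := by
  haveI : Nonempty α := ⟨s0⟩
  set m := Fintype.card (α × α) with hm
  have hmpos : 0 < m := Fintype.card_pos
  set e := Fintype.equivFin (α × α) with he
  set pair : ℕ → α × α := fun j => e.symm ⟨j % m, Nat.mod_lt _ hmpos⟩ with hpair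
  refine ⟨fun k => (sol r htot pair s0 k).1, rfl, fun k => sol_path r htot pair s0 k, ?_⟩
  intro x hx y hxy N
  set π : ℕ → α := fun k => (sol r htot pair s0 k).1 with hπ
  -- the index of the pair (x, y)
  set i₀ : Fin m := e (x, y) with hi₀
  set J : ℕ := i₀.val + m * N with hJ
  have hpairJ : pair J = (x, y) := by
    have : J % m = i₀.val := by
      rw [hJ, Nat.add_mul_mod_self_left, Nat.mod_eq_of_lt i₀.isLt]
    simp only [hpair]
    rw [show (⟨J % m, Nat.mod_lt _ hmpos⟩ : Fin m) = i₀ from Fin.ext this]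
    exact e.symm_apply_apply (x, y)
  have hJN : N ≤ J := by
    have : N ≤ m * N := Nat.le_mul_of_pos_left N hmpos
    omega
  obtain ⟨k, hk1, hk2, hk3⟩ := sol_hitJ r htot pair s0 J
  -- the condition holds at stage k since x occurs at some time ≥ k
  obtain ⟨t, htk, htx⟩ := hx k
  have hcond : Relation.ReflTransGen r (sol r htot pair s0 k).1 (pair (sol r htot pair s0 k).2.2).1 ∧
      r (pair (sol r htot pair s0 k).2.2).1 (pair (sol r htot pair s0 k).2.2).2 := by
    rw [hk2, hpairJ]
    constructor
    · have := path_reach (r := r) (π := fun k => (sol r htot pair s0 k).1) (fun k => sol_path r htot pair s0 k) htk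
      rwa [show (sol r htot pair s0 t).1 = x from htx] at this
    · exact hxy
  obtain ⟨d, hd1, hd2⟩ := sol_stage_emit r htot pair s0 k hk1 hcond
  rw [hk2, hpairJ] at hd2
  exact ⟨k + d, by omega, hd2⟩


section BN

variable {n : ℕ} {O I : Finset (Fin n)} {F : Fin n → BNState n → Bool}

lemma step_total (hn : 1 ≤ n) (F : Fin n → BNState n → Bool) (s : BNState n) :
    ∃ t, Step F s t := by
  set i : Fin n := ⟨0, hn⟩
  by_cases h : F i s = s i
  · exact ⟨s, Or.inr ⟨rfl, i, h⟩⟩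
  · refine ⟨Function.update s i (F i s), Or.inl ⟨i, ?_, ?_, ?_⟩⟩
    · rw [Function.update_self]
    · rw [Function.update_self]
      cases hb : s i <;> cases hb2 : F i s <;> simp_all
    · intro j hj; exact Function.update_of_ne hj _ _

lemma ctrl_fix {s : BNState n} (hs : s ∈ ctrlSpace O I) : applyControl O I s = s := by
  funext i
  simp only [applyControl]
  split_ifs with h1 h2
  · exact (hs.1 i h1).symm
  · exact (hs.2 i h2).symm
  · rfl

lemma ctrlF_O {i : Fin n} (hi : i ∈ O) (s : BNState n) : ctrlF O I F i s = false := by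
  simp [ctrlF, hi]

lemma ctrlF_I (hOI : Disjoint O I) {i : Fin n} (hi : i ∈ I) (s : BNState n) :
    ctrlF O I F i s = true := by
  have : i ∉ O := fun h => Finset.disjoint_left.mp hOI h hi
  simp [ctrlF, this, hi]

lemma ctrlF_free {i : Fin n} (hiO : i ∉ O) (hiI : i ∉ I) (s : BNState n) :
    ctrlF O I F i s = F i s := by
  simp [ctrlF, hiO, hiI]

/-- Every attractor of the controlled system lies in the controlled state space. -/
lemma attr_sub_space (hOI : Disjoint O I) {A : Set (BNState n)}
    (hA : IsAttractor (ctrlF O I F) A) : A ⊆ ctrlSpace O I := by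
  intro s hs
  have hGA : GAttr (Step (ctrlF O I F)) A := hA
  -- an invariant: once variable i has its controlled value, it keeps it forever
  have hinv : ∀ (i : Fin n) (b : Bool), ctrlF O I F i = (fun _ => b) →
      ∀ t u : BNState n, t i = b → Relation.ReflTransGen (Step (ctrlF O I F)) t u → u i = b := by
    intro i b hib t u ht hr
    induction hr with
    | refl => exact ht
    | tail _ hstep ih =>
      rcases hstep with ⟨j, h1, _, h3⟩ | ⟨heq, -⟩
      · by_cases hji : j = i
        · subst hji; rw [h1, congrFun hib]
        · rw [h3 i (fun h => hji h.symm)]; exact ih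
      · rw [heq]; exact ih
  have key : ∀ (i : Fin n) (b : Bool), ctrlF O I F i = (fun _ => b) → s i = b := by
    intro i b hib
    by_contra hsi
    have hsib : b = !(s i) := by cases hb : s i <;> cases b <;> simp_all
    have hstep : Step (ctrlF O I F) s (Function.update s i b) := by
      refine Or.inl ⟨i, ?_, ?_, ?_⟩
      · rw [Function.update_self, congrFun hib]
      · rw [Function.update_self]; exact hsib
      · intro j hj; exact Function.update_of_ne hj _ _
    have hs'A : Function.update s i b ∈ A := hGA.closed hs (Relation.ReflTransGen.single hstep)
    have hback : Relation.ReflTransGen (Step (ctrlF O I F)) (Function.update s i b) s := by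
      have := hGA.2.1 _ hs'A
      rw [← this] at hs
      exact hs
    exact hsi (hinv i b hib _ s (Function.update_self i b s) hback)
  constructor
  · intro i hi
    exact key i false (funext fun t => ctrlF_O hi t)
  · intro i hi
    exact key i true (funext fun t => ctrlF_I hOI hi t)

/-- In the controlled space, a controlled step is a stutter or an uncontrolled step. -/
lemma stepG_cases (hOI : Disjoint O I) {s s' : BNState n} (hs : s ∈ ctrlSpace O I)
    (h : Step (ctrlF O I F) s s') : s' = s ∨ Step F s s' := by
  rcases h with ⟨i, h1, h2, h3⟩ | ⟨heq, -⟩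
  · by_cases hiO : i ∈ O
    · rw [ctrlF_O hiO] at h1
      rw [hs.1 i hiO] at h2
      rw [h1] at h2
      simp at h2
    · by_cases hiI : i ∈ I
      · rw [ctrlF_I hOI hiI] at h1
        rw [hs.2 i hiI] at h2
        rw [h1] at h2
        simp at h2
      · rw [ctrlF_free hiO hiI] at h1
        exact Or.inr (Or.inl ⟨i, h1, h2, h3⟩)
  · exact Or.inl heq

/-- Within the controlled space, an uncontrolled step is a controlled step. -/
lemma stepF_to_G (hOI : Disjoint O I) {s s' : BNState n} (hs : s ∈ ctrlSpace O I)
    (hs' : s' ∈ ctrlSpace O I) (h : Step F s s') : Step (ctrlF O I F) s s' := by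
  rcases h with ⟨i, h1, h2, h3⟩ | ⟨heq, i, hi⟩
  · by_cases hiO : i ∈ O
    · rw [hs.1 i hiO] at h2
      rw [hs'.1 i hiO] at h2
      simp at h2
    · by_cases hiI : i ∈ I
      · rw [hs.2 i hiI] at h2
        rw [hs'.2 i hiI] at h2
        simp at h2
      · exact Or.inl ⟨i, by rw [ctrlF_free hiO hiI]; exact h1, h2, h3⟩
  · refine Or.inr ⟨heq, ?_⟩
    by_cases hiO : i ∈ O
    · exact ⟨i, by rw [ctrlF_O hiO, hs.1 i hiO]⟩
    · by_cases hiI : i ∈ I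
      · exact ⟨i, by rw [ctrlF_I hOI hiI, hs.2 i hiI]⟩
      · exact ⟨i, by rw [ctrlF_free hiO hiI]; exact hi⟩

/-- If `At` is an attractor of the original system contained in the controlled space,
it is an attractor of the controlled system. -/
lemma attr_ctrl (hOI : Disjoint O I) {At : Set (BNState n)} (hAt : IsAttractor F At)
    (hsub : At ⊆ ctrlSpace O I) : IsAttractor (ctrlF O I F) At := by
  have hreach : ∀ s ∈ At, reach (ctrlF O I F) s = At := by
    intro s hs
    apply Set.eq_of_subset_of_subset
    · intro t ht
      have : ∀ u, Relation.ReflTransGen (Step (ctrlF O I F)) s u → u ∈ At := by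
        intro u hu
        induction hu with
        | refl => exact hs
        | tail _ hstep ih =>
          rcases stepG_cases hOI (hsub ih) hstep with rfl | hF
          · exact ih
          · have hmem : _ ∈ reach F _ := Relation.ReflTransGen.single hF
            rwa [hAt.2.1 _ ih] at hmem
      exact this t ht
    · intro t ht
      have hFr : Relation.ReflTransGen (Step F) s t := by
        have : t ∈ reach F s := by rw [hAt.2.1 s hs]; exact ht
        exact this
      clear ht
      induction hFr with
      | refl => exact Relation.ReflTransGen.refl
      | @tail u v hu hstep ih =>
        have huAt : u ∈ At := by
          have : u ∈ reach F s := hu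
          rwa [hAt.2.1 s hs] at this
        have hvAt : v ∈ At := by
          have : v ∈ reach F u := Relation.ReflTransGen.single hstep
          rwa [hAt.2.1 u huAt] at this
        exact ih.tail (stepF_to_G hOI (hsub huAt) (hsub hvAt) hstep)
  refine ⟨hAt.1, hreach, ?_⟩
  intro B hBA hBne hBreach
  obtain ⟨s, hsB⟩ := hBne
  rw [← hBreach s hsB, hreach s (hBA hsB)]

end BN

/-- `C` is a permanent target control for the attractor `At`
iff `At` is an attractor of `TS|_C` and `C(S) ⊆ bas^S_{TS|_C}(At)`. -/
theorem ptc_characterisation {n : ℕ} (hn : 1 ≤ n) (F : Fin n → BNState n → Bool)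
    (At : Set (BNState n)) (hAt : IsAttractor F At)
    (O I : Finset (Fin n)) (hOI : Disjoint O I) :
    (At ⊆ ctrlSpace O I ∧
      ∀ s : BNState n, ∀ π : ℕ → BNState n,
        IsPath (ctrlF O I F) π → Fair (ctrlF O I F) π → π 0 = applyControl O I s →
        ∃ k, π k ∈ At)
    ↔ (IsAttractor (ctrlF O I F) At ∧
        Set.range (applyControl O I) ⊆ strongBasin (ctrlF O I F) At) := by
  set G := ctrlF O I F with hG
  have htot : ∀ s : BNState n, ∃ t, Step G s t := step_total hn G
  constructor
  · rintro ⟨hsub, hfair⟩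
    have hGAt : IsAttractor G At := attr_ctrl hOI hAt hsub
    refine ⟨hGAt, ?_⟩
    rintro p ⟨s, rfl⟩
    constructor
    · -- At is reachable from applyControl O I s : take any fair path
      obtain ⟨π, hπ0, hπpath, hπfair⟩ := exists_fair_path htot (applyControl O I s)
      obtain ⟨k, hk⟩ := hfair s π hπpath hπfair hπ0
      refine ⟨π k, ?_, hk⟩
      have : Relation.ReflTransGen (Step G) (π 0) (π k) := path_reach hπpath (Nat.zero_le k)
      rwa [hπ0] at this
    · -- no other attractor is reachable
      intro A' hA' hne
      by_contra hcon
      obtain ⟨t, htr, htA'⟩ := Set.nonempty_iff_ne_empty.mpr hcon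
      have htC : t ∈ ctrlSpace O I := attr_sub_space hOI hA' htA'
      obtain ⟨π, hπ0, hπpath, hπfair⟩ := exists_fair_path htot t
      have hπ0' : π 0 = applyControl O I t := by rw [hπ0, ctrl_fix htC]
      obtain ⟨k, hk⟩ := hfair t π hπpath hπfair hπ0'
      have hπkA' : π k ∈ A' := by
        have : Relation.ReflTransGen (Step G) (π 0) (π k) := path_reach hπpath (Nat.zero_le k)
        rw [hπ0] at this
        rwa [← hA'.2.1 t htA']
      have hGA' : GAttr (Step G) A' := hA'
      have hGAt' : GAttr (Step G) At := hGAt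
      exact hne (hGA'.eq_of_inter hGAt' ⟨π k, hπkA', hk⟩)
  · rintro ⟨hGAt, hbasin⟩
    have hsub : At ⊆ ctrlSpace O I := attr_sub_space hOI hGAt
    refine ⟨hsub, ?_⟩
    intro s π hπpath hπfair hπ0
    have hp : applyControl O I s ∈ strongBasin G At :=
      hbasin (Set.mem_range_self s)
    have hL : GAttr (Step G) {x | GInfO π x} :=
      fair_path_infO_attr hπpath hπfair
    obtain ⟨x, hx⟩ := hL.1
    obtain ⟨k, -, hk⟩ := hx 0
    have hxreach : x ∈ reach G (applyControl O I s) := by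
      have : Relation.ReflTransGen (Step G) (π 0) (π k) := path_reach hπpath (Nat.zero_le k)
      rw [hπ0, hk] at this
      exact this
    by_cases hLAt : {x | GInfO π x} = At
    · obtain ⟨k', -, hk'⟩ := hx 0
      exact ⟨k', by rw [hk']; rw [← hLAt]; exact hx⟩
    · have hLattr : IsAttractor G {x | GInfO π x} := hL
      have hemp := hp.2 _ hLattr hLAt
      exact absurd hemp (Set.nonempty_iff_ne_empty.mp ⟨x, hxreach, hx⟩)
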